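/- arXiv:0911.3725 — 3 statements merged into one kernel-verified Lean document; each statement's English description precedes it below -/
import Mathlib

section
/- Let Y be a topological space that is the union of two closed subsets Y₁ and Y₂, each of which has a countable basis for its topology. Then Y has a countable basis for its topology; indeed, the sets U₁ \ Y₂ for U₁ in a countable basis of Y₁, U₂ \ Y₁ for U₂ in a countable basis of Y₂, and the interiors (in Y) of U₁ ∪ U₂, together form a countable basis of Y. -/
open Set TopologicalSpace

private lemma aux_open {Y : Type*} [TopologicalSpace Y] {Y₁ Y₂ : Set Y}
    (h2 : IsClosed Y₂) (hU : Y₁ ∪ Y₂ = univ) {U : Set ↥Y₁} (hUo : IsOpen U) :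
    IsOpen ((Subtype.val '' U) \ Y₂) := by
  rw [isOpen_induced_iff] at hUo
  obtain ⟨V, hV, rfl⟩ := hUo
  have himg : (Subtype.val '' ((Subtype.val : Y₁ → Y) ⁻¹' V)) = Y₁ ∩ V :=
    Subtype.image_preimage_coe _ _
  have hc : Y₂ᶜ ⊆ Y₁ := by
    intro x hx
    rcases (Set.ext_iff.mp hU x).2 trivial with h | h
    · exact h
    · exact absurd h hx
  have : (Subtype.val '' ((Subtype.val : Y₁ → Y) ⁻¹' V)) \ Y₂ = V ∩ Y₂ᶜ := by
    rw [himg]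
    ext x
    constructor
    · rintro ⟨⟨_, hv⟩, hn⟩; exact ⟨hv, hn⟩
    · rintro ⟨hv, hn⟩; exact ⟨⟨hc hn, hv⟩, hn⟩
  rw [this]
  exact hV.inter h2.isOpen_compl

/-- Let Y be a topological space which is the union of two closed subsets Y₁ and Y₂, each
second countable in the subspace topology. Then Y is second countable; indeed, given
countable bases B₁ of Y₁ and B₂ of Y₂, the sets U₁ \ Y₂ (U₁ ∈ B₁), U₂ \ Y₁ (U₂ ∈ B₂) and
the interiors in Y of the unions U₁ ∪ U₂ form a countable basis of Y. -/
theorem stmt_0 {Y : Type*} [TopologicalSpace Y] (Y₁ Y₂ : Set Y)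
    (h1 : IsClosed Y₁) (h2 : IsClosed Y₂) (hU : Y₁ ∪ Y₂ = univ)
    (B₁ : Set (Set ↥Y₁)) (B₂ : Set (Set ↥Y₂))
    (hB₁ : B₁.Countable) (hB₂ : B₂.Countable)
    (hb₁ : IsTopologicalBasis B₁) (hb₂ : IsTopologicalBasis B₂) :
    SecondCountableTopology Y ∧
    IsTopologicalBasis
      ((fun U₁ : Set ↥Y₁ => (Subtype.val '' U₁) \ Y₂) '' B₁ ∪
       (fun U₂ : Set ↥Y₂ => (Subtype.val '' U₂) \ Y₁) '' B₂ ∪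
       (fun p : Set ↥Y₁ × Set ↥Y₂ =>
          interior ((Subtype.val '' p.1) ∪ (Subtype.val '' p.2))) '' (B₁ ×ˢ B₂)) := by
  have hU' : Y₂ ∪ Y₁ = univ := by rw [Set.union_comm]; exact hU
  have hbasis : IsTopologicalBasis
      ((fun U₁ : Set ↥Y₁ => (Subtype.val '' U₁) \ Y₂) '' B₁ ∪
       (fun U₂ : Set ↥Y₂ => (Subtype.val '' U₂) \ Y₁) '' B₂ ∪
       (fun p : Set ↥Y₁ × Set ↥Y₂ =>
          interior ((Subtype.val '' p.1) ∪ (Subtype.val '' p.2))) '' (B₁ ×ˢ B₂)) := by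
    apply isTopologicalBasis_of_isOpen_of_nhds
    · rintro s ((⟨U₁, hU₁, rfl⟩ | ⟨U₂, hU₂, rfl⟩) | ⟨p, -, rfl⟩)
      · exact aux_open h2 hU (hb₁.isOpen hU₁)
      · exact aux_open h1 hU' (hb₂.isOpen hU₂)
      · exact isOpen_interior
    · intro y W hyW hW
      by_cases hy2 : y ∈ Y₂
      · by_cases hy1 : y ∈ Y₁
        · -- y in both: use interior of union
          obtain ⟨U₁, hU₁B, hyU₁, hU₁W⟩ := hb₁.exists_subset_of_mem_open
            (show (⟨y, hy1⟩ : ↥Y₁) ∈ (Subtype.val ⁻¹' W) from hyW)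
            (hW.preimage continuous_subtype_val)
          obtain ⟨U₂, hU₂B, hyU₂, hU₂W⟩ := hb₂.exists_subset_of_mem_open
            (show (⟨y, hy2⟩ : ↥Y₂) ∈ (Subtype.val ⁻¹' W) from hyW)
            (hW.preimage continuous_subtype_val)
          refine ⟨_, Set.mem_union_right _ ⟨(U₁, U₂), ⟨hU₁B, hU₂B⟩, rfl⟩, ?_, ?_⟩
          · -- y ∈ interior
            obtain ⟨V₁, hV₁, rfl⟩ := isOpen_induced_iff.mp (hb₁.isOpen hU₁B)
            obtain ⟨V₂, hV₂, rfl⟩ := isOpen_induced_iff.mp (hb₂.isOpen hU₂B)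
            apply mem_interior.mpr
            refine ⟨V₁ ∩ V₂, ?_, hV₁.inter hV₂, hyU₁, hyU₂⟩
            intro x ⟨hx1, hx2⟩
            rcases (Set.ext_iff.mp hU x).2 trivial with hx | hx
            · exact Or.inl ⟨⟨x, hx⟩, hx1, rfl⟩
            · exact Or.inr ⟨⟨x, hx⟩, hx2, rfl⟩
          · -- interior ⊆ W
            refine interior_subset.trans ?_
            rintro x (⟨u, hu, rfl⟩ | ⟨u, hu, rfl⟩)
            · exact hU₁W hu
            · exact hU₂W hu
        · -- y ∈ Y₂ \ Y₁
          obtain ⟨U₂, hU₂B, hyU₂, hU₂W⟩ := hb₂.exists_subset_of_mem_open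
            (show (⟨y, hy2⟩ : ↥Y₂) ∈ (Subtype.val ⁻¹' W) from hyW)
            (hW.preimage continuous_subtype_val)
          refine ⟨_, Set.mem_union_left _ (Set.mem_union_right _ ⟨U₂, hU₂B, rfl⟩), ⟨⟨⟨y, hy2⟩, hyU₂, rfl⟩, hy1⟩, ?_⟩
          rintro x ⟨⟨u, hu, rfl⟩, -⟩
          exact hU₂W hu
      · -- y ∉ Y₂, so y ∈ Y₁
        have hy1 : y ∈ Y₁ := by
          rcases (Set.ext_iff.mp hU y).2 trivial with h | h
          · exact h
          · exact absurd h hy2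
        obtain ⟨U₁, hU₁B, hyU₁, hU₁W⟩ := hb₁.exists_subset_of_mem_open
          (show (⟨y, hy1⟩ : ↥Y₁) ∈ (Subtype.val ⁻¹' W) from hyW)
          (hW.preimage continuous_subtype_val)
        refine ⟨_, Set.mem_union_left _ (Set.mem_union_left _ ⟨U₁, hU₁B, rfl⟩), ⟨⟨⟨y, hy1⟩, hyU₁, rfl⟩, hy2⟩, ?_⟩
        rintro x ⟨⟨u, hu, rfl⟩, -⟩
        exact hU₁W hu
  refine ⟨hbasis.secondCountableTopology ?_, hbasis⟩
  exact ((hB₁.image _).union (hB₂.image _)).union ((hB₁.prod hB₂).image _)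
end

section
/- Let M be a topological space, Z ⊆ M closed, and suppose there exists a homotopy H : M × [0,1] → M with H₀ = id_M and H_t(M) ⊆ M \ Z for all t > 0. If M is contractible, then M \ Z is contractible. -/
open unitInterval in
/-- Let M be a topological space, Z ⊆ M closed, and suppose there exists a homotopy
H : M × [0,1] → M with H₀ = id and H_t(M) ⊆ M \ Z for all t > 0. If M is contractible,
then M \ Z is contractible. -/
theorem stmt_12 {M : Type*} [TopologicalSpace M] (Z : Set M) (hZ : IsClosed Z)
    (H : C(M × I, M))
    (h0 : ∀ x : M, H (x, 0) = x)
    (ht : ∀ (x : M) (t : I), 0 < (t : ℝ) → H (x, t) ∉ Z)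
    (hM : ContractibleSpace M) :
    ContractibleSpace ↥(Zᶜ) := by
  obtain ⟨m₀, hc⟩ := (contractible_iff_id_nullhomotopic M).mp hM
  obtain ⟨G⟩ := hc
  have h1pos : (0 : ℝ) < ((1 : I) : ℝ) := by norm_num
  set p : ↥(Zᶜ) := ⟨H (m₀, 1), ht m₀ 1 h1pos⟩ with hp
  -- membership lemma
  have hmem : ∀ (x : ↥(Zᶜ)) (t : I), H ((x : M), t) ∈ Zᶜ := by
    intro x t
    rcases eq_or_lt_of_le t.2.1 with h | h
    · have : t = 0 := by ext; exact h.symm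
      rw [this, h0]
      exact x.2
    · exact ht _ _ h
  -- r : retraction-like map
  let r : C(↥(Zᶜ), ↥(Zᶜ)) :=
    ⟨fun x => ⟨H ((x : M), 1), hmem x 1⟩, by
      apply Continuous.subtype_mk
      exact H.continuous.comp (by continuity)⟩
  -- Homotopy from id to r
  let H1 : (ContinuousMap.id ↥(Zᶜ)).Homotopy r :=
    { toFun := fun q => ⟨H ((q.2 : M), q.1), hmem q.2 q.1⟩
      continuous_toFun := Continuous.subtype_mk
        (H.continuous.comp ((continuous_subtype_val.comp continuous_snd).prodMk
          continuous_fst)) _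
      map_zero_left := fun x => Subtype.ext (h0 x)
      map_one_left := fun x => rfl }
  -- Homotopy from r to const p
  let H2 : r.Homotopy (ContinuousMap.const _ p) :=
    { toFun := fun q => ⟨H (G (q.1, (q.2 : M)), 1), ht _ 1 h1pos⟩
      continuous_toFun := Continuous.subtype_mk
        (H.continuous.comp ((G.continuous.comp (continuous_fst.prodMk
          (continuous_subtype_val.comp continuous_snd))).prodMk continuous_const)) _
      map_zero_left := fun x => Subtype.ext (by
        show H (G (0, (x : M)), 1) = H ((x : M), 1)
        rw [G.apply_zero]; rfl)
      map_one_left := fun x => Subtype.ext (by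
        show H (G (1, (x : M)), 1) = H (m₀, 1)
        rw [G.apply_one]; rfl) }
  exact (contractible_iff_id_nullhomotopic _).mpr
    ⟨p, (ContinuousMap.Homotopic.trans ⟨H1⟩ ⟨H2⟩ : (ContinuousMap.id ↥(Zᶜ)).Homotopic (ContinuousMap.const _ p))⟩
end

section
/- Suppose a functor-like assignment f ↦ f̄ extends continuous G-equivariant maps f : X → Y between locally compact cocompact proper G-spaces to maps f̄ : X ∪ ∂G → Y ∪ ∂G by the identity on ∂G, where the topology on X ∪ ∂G has neighborhoods of z ∈ ∂G of the form (U ∩ ∂G) ∪ (U ∩ G)·K for U an open neighborhood of z in Ḡ and K a compact subset with G·K = X (where G·K uses a fixed orbit identification). Then f̄ is continuous. -/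
open Set Pointwise

/-- The compactification topology on `X ∪ ∂G` for a cocompact proper `G`-space `X`, where
`∂G` is the boundary of `G` inside a compactification `Ḡ` (given by a map `ι : G → Ḡ`):
it is generated by the open subsets of `X` together with the sets
`(U ∩ ∂G) ∪ (U ∩ G)·K`, for `U` open in `Ḡ` and `K` compact with `G·K = X`. -/
def compactificationTopology {Γ : Type*} [Group Γ] {Gbar : Type*} [TopologicalSpace Gbar]
    (ι : Γ → Gbar) (X : Type*) [TopologicalSpace X] [MulAction Γ X] :
    TopologicalSpace (X ⊕ {z : Gbar // z ∉ Set.range ι}) :=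
  TopologicalSpace.generateFrom
    ({s | ∃ O : Set X, IsOpen O ∧ s = Sum.inl '' O} ∪
     {s | ∃ (U : Set Gbar) (K : Set X), IsOpen U ∧ IsCompact K ∧
        (⋃ g : Γ, g • K) = Set.univ ∧
        s = Sum.inl '' (⋃ g ∈ {g : Γ | ι g ∈ U}, g • K) ∪
            Sum.inr '' {z : {z : Gbar // z ∉ Set.range ι} | (z : Gbar) ∈ U}})

/-- Let G be a (hyperbolic) group with compactification Ḡ = G ∪ ∂G whose left translation
action is small at infinity, and let X, Y be locally compact spaces with cocompact proper
continuous G-actions. Any continuous G-equivariant map f : X → Y extends, by the identity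
on ∂G, to a continuous map f̄ : X ∪ ∂G → Y ∪ ∂G for the compactification topologies. -/
theorem stmt_13 {Γ : Type*} [Group Γ] {Gbar : Type*} [TopologicalSpace Gbar]
    [CompactSpace Gbar] (ι : Γ → Gbar) (hinj : Function.Injective ι)
    (hdense : Dense (Set.range ι))
    (hsmall : ∀ z ∉ Set.range ι, ∀ K : Set Γ, K.Finite → ∀ U ∈ nhds z,
      ∃ V ∈ nhds z, V ⊆ U ∧
        ∀ g : Γ, (∃ k ∈ K, ι (g * k) ∈ V) → ∀ k ∈ K, ι (g * k) ∈ U)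
    (X Y : Type*) [TopologicalSpace X] [TopologicalSpace Y]
    [T2Space X] [T2Space Y] [LocallyCompactSpace X] [LocallyCompactSpace Y]
    [MulAction Γ X] [MulAction Γ Y] [ContinuousConstSMul Γ X] [ContinuousConstSMul Γ Y]
    (hcocptX : ∃ K : Set X, IsCompact K ∧ (⋃ g : Γ, g • K) = Set.univ)
    (hcocptY : ∃ K : Set Y, IsCompact K ∧ (⋃ g : Γ, g • K) = Set.univ)
    (hproperX : ∀ K K' : Set X, IsCompact K → IsCompact K' →
      {g : Γ | (g • K ∩ K').Nonempty}.Finite)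
    (hproperY : ∀ K K' : Set Y, IsCompact K → IsCompact K' →
      {g : Γ | (g • K ∩ K').Nonempty}.Finite)
    (f : C(X, Y)) (hequiv : ∀ (g : Γ) (x : X), f (g • x) = g • f x) :
    @Continuous _ _ (compactificationTopology ι X) (compactificationTopology ι Y)
      (Sum.map f id) := by
  classical
  obtain ⟨K₀, hK₀c, hK₀cov⟩ := hcocptX
  letI : TopologicalSpace (X ⊕ {z : Gbar // z ∉ Set.range ι}) := compactificationTopology ι X
  -- generic membership lemmas
  have meml : ∀ (A : Set X) (B : Set {z : Gbar // z ∉ Set.range ι}) (x : X),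
      ((Sum.inl x : X ⊕ {z : Gbar // z ∉ Set.range ι}) ∈ Sum.inl '' A ∪ Sum.inr '' B) ↔
        x ∈ A := by
    intro A B x
    constructor
    · rintro (⟨x', hx', h⟩ | ⟨z, _, h⟩)
      · obtain rfl : x' = x := Sum.inl_injective h
        exact hx'
      · exact absurd h (by simp)
    · intro h
      exact Or.inl ⟨x, h, rfl⟩
  have memr : ∀ (A : Set X) (B : Set {z : Gbar // z ∉ Set.range ι})
      (z : {z : Gbar // z ∉ Set.range ι}),
      ((Sum.inr z : X ⊕ {z : Gbar // z ∉ Set.range ι}) ∈ Sum.inl '' A ∪ Sum.inr '' B) ↔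
        z ∈ B := by
    intro A B z
    constructor
    · rintro (⟨x, _, h⟩ | ⟨z', hz', h⟩)
      · exact absurd h (by simp)
      · obtain rfl : z' = z := Sum.inr_injective h
        exact hz'
    · intro h
      exact Or.inr ⟨z, h, rfl⟩
  refine continuous_generateFrom_iff.mpr ?_
  rintro s (⟨O, hO, rfl⟩ | ⟨U, K, hU, hK, hKcov, rfl⟩)
  · have hpre : (Sum.map f id) ⁻¹' (Sum.inl '' O)
        = (Sum.inl '' (f ⁻¹' O) : Set (X ⊕ {z : Gbar // z ∉ Set.range ι})) := by
      ext (x | z) <;> simp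
    rw [hpre]
    exact TopologicalSpace.GenerateOpen.basic _
      (Or.inl ⟨_, hO.preimage f.continuous, rfl⟩)
  · -- key: x ∈ g • (f ⁻¹' K) ↔ f x ∈ g • K
    have hpreK : ∀ (g : Γ) (x : X), x ∈ g • (f ⁻¹' K) ↔ f x ∈ g • K := by
      intro g x
      rw [mem_smul_set_iff_inv_smul_mem, mem_smul_set_iff_inv_smul_mem]
      simp [mem_preimage, hequiv]
    -- the finite set of translates of K meeting f '' K₀
    have hFfin : {g : Γ | (g • K ∩ (f '' K₀)).Nonempty}.Finite :=
      hproperY K (f '' K₀) hK (hK₀c.image f.continuous)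
    -- the compact "fundamental set" mapping into K
    set KX : Set X :=
      ⋃ g ∈ {g : Γ | (g • K ∩ (f '' K₀)).Nonempty}, ((g⁻¹ • K₀) ∩ f ⁻¹' K) with hKX
    have hKXc : IsCompact KX :=
      hFfin.isCompact_biUnion fun g _ =>
        (IsCompact.smul g⁻¹ hK₀c).inter_right ((hK.isClosed).preimage f.continuous)
    have hKXsub : KX ⊆ f ⁻¹' K := by
      intro x hx
      obtain ⟨g, _, _, h⟩ := mem_iUnion₂.1 hx
      exact h
    have hKXcov : (⋃ g : Γ, g • KX) = Set.univ := by
      apply eq_univ_of_forall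
      intro x
      have hx : x ∈ ⋃ g : Γ, g • K₀ := hK₀cov ▸ mem_univ x
      obtain ⟨h, hh⟩ := mem_iUnion.1 hx
      have hh' : h⁻¹ • x ∈ K₀ := mem_smul_set_iff_inv_smul_mem.1 hh
      have hfx : f (h⁻¹ • x) ∈ ⋃ g : Γ, g • K := hKcov ▸ mem_univ _
      obtain ⟨g, hg⟩ := mem_iUnion.1 hfx
      have hgF : g ∈ {g : Γ | (g • K ∩ (f '' K₀)).Nonempty} :=
        ⟨f (h⁻¹ • x), hg, ⟨h⁻¹ • x, hh', rfl⟩⟩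
      refine mem_iUnion.2 ⟨h * g, ?_⟩
      rw [mem_smul_set_iff_inv_smul_mem]
      have heq : (h * g)⁻¹ • x = g⁻¹ • (h⁻¹ • x) := by
        rw [mul_inv_rev, mul_smul]
      rw [heq]
      refine mem_biUnion hgF ⟨⟨h⁻¹ • x, hh', rfl⟩, ?_⟩
      rw [mem_preimage, hequiv]
      exact mem_smul_set_iff_inv_smul_mem.1 hg
    -- compute the preimage
    have hpre : (Sum.map f id) ⁻¹'
        (Sum.inl '' (⋃ g ∈ {g : Γ | ι g ∈ U}, g • K) ∪
          Sum.inr '' {z : {z : Gbar // z ∉ Set.range ι} | (z : Gbar) ∈ U})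
        = Sum.inl '' (f ⁻¹' (⋃ g ∈ {g : Γ | ι g ∈ U}, g • K)) ∪
          Sum.inr '' {z : {z : Gbar // z ∉ Set.range ι} | (z : Gbar) ∈ U} := by
      ext (x | z) <;> simp
    rw [hpre]
    have key : Sum.inl '' (f ⁻¹' (⋃ g ∈ {g : Γ | ι g ∈ U}, g • K)) ∪
          Sum.inr '' {z : {z : Gbar // z ∉ Set.range ι} | (z : Gbar) ∈ U}
        = (Sum.inl '' (⋃ g ∈ {g : Γ | ι g ∈ U}, g • KX) ∪
            Sum.inr '' {z : {z : Gbar // z ∉ Set.range ι} | (z : Gbar) ∈ U}) ∪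
          ⋃ c : {c : Γ × X // ι c.1 ∈ U ∧ f c.2 ∈ c.1 • K},
            (Sum.inl '' (⋃ g ∈ {g : Γ | ι g ∈ U},
                g • (insert ((c : Γ × X).1⁻¹ • (c : Γ × X).2) KX)) ∪
              Sum.inr '' {z : {z : Gbar // z ∉ Set.range ι} | (z : Gbar) ∈ U}) := by
      ext p
      rcases p with x | z
      · simp only [mem_union, mem_iUnion, meml, memr, mem_preimage]
        constructor
        · intro hx
          obtain ⟨g, hgU, hfx⟩ := hx
          refine Or.inr ⟨⟨(g, x), hgU, hfx⟩, ?_⟩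
          exact ⟨g, hgU, mem_smul_set_iff_inv_smul_mem.2 (mem_insert _ _)⟩
        · rintro (hx | ⟨⟨⟨g₀, x₀⟩, hg₀U, hfx₀⟩, hx⟩)
          · obtain ⟨g, hgU, hgx⟩ := hx
            exact ⟨g, hgU, (hpreK g x).1 (smul_set_mono hKXsub hgx)⟩
          · obtain ⟨g, hgU, hgx⟩ := hx
            refine ⟨g, hgU, ?_⟩
            rw [mem_smul_set_iff_inv_smul_mem] at hgx
            rcases mem_insert_iff.1 hgx with hgx' | hgx'
            · rw [mem_smul_set_iff_inv_smul_mem, ← hequiv, hgx', hequiv]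
              exact mem_smul_set_iff_inv_smul_mem.1 hfx₀
            · exact (hpreK g x).1 (mem_smul_set_iff_inv_smul_mem.2 (hKXsub hgx'))
      · simp only [mem_union, mem_iUnion, meml, memr, mem_setOf_eq]
        tauto
    rw [key]
    apply IsOpen.union
    · exact TopologicalSpace.GenerateOpen.basic _
        (Or.inr ⟨U, KX, hU, hKXc, hKXcov, rfl⟩)
    · apply isOpen_iUnion
      rintro ⟨⟨g₀, x₀⟩, hg₀U, hfx₀⟩
      refine TopologicalSpace.GenerateOpen.basic _
        (Or.inr ⟨U, _, hU, hKXc.insert _, ?_, rfl⟩)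
      apply eq_univ_of_forall
      intro x
      have hx : x ∈ ⋃ g : Γ, g • KX := hKXcov ▸ mem_univ x
      obtain ⟨g, hg⟩ := mem_iUnion.1 hx
      exact mem_iUnion.2 ⟨g, smul_set_mono (subset_insert _ _) hg⟩
end
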